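/- arXiv:2105.07283 — 2 statements merged into one kernel-verified Lean document; each statement's English description precedes it below -/
import Mathlib

section
/- Suppose for each t ∈ (0,1) a classifier H(t) ∈ ℋ is given such that the function h : (0,1) × Ω → {0,1} with h(t,ω) = 1 if ω ∈ H(t) and h(t,ω) = 0 otherwise is measurable with respect to the product σ-field ℬ((0,1)) ⊗ ℋ. Define the ℋ-measurable random variable Z by Z(ω) = ∫₀¹ h(t,ω) dt, and let Ψ = P[A | ℋ]. Then the calibration loss of Z satisfies E[(Z − Ψ)²] = 2 ∫₀¹ ( L({Z > t}, t) − L*_ℋ(t) ) dt ≤ 2 ∫₀¹ ( L(H(t), t) − L*_ℋ(t) ) dt. -/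
open MeasureTheory

/-- Cost-weighted mean loss `L(H, t) = (1 - t) P[A ∩ Hᶜ] + t P[Aᶜ ∩ H]`. -/
noncomputable def cwLoss {Ω : Type*} {mΩ : MeasurableSpace Ω} (P : Measure Ω) (A H : Set Ω)
    (t : ℝ) : ℝ :=
  (1 - t) * (P (A ∩ Hᶜ)).toReal + t * (P (Aᶜ ∩ H)).toReal

/-- Cost-weighted Bayes loss `L*_ℱ(t) = inf_{F ∈ ℱ} L(F, t)`. -/
noncomputable def bayesLoss {Ω : Type*} {mΩ : MeasurableSpace Ω} (P : Measure Ω) (A : Set Ω)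
    (F : MeasurableSpace Ω) (t : ℝ) : ℝ :=
  ⨅ H : {H : Set Ω // MeasurableSet[F] H}, cwLoss P A H t

/-! ### Auxiliary real-analysis lemmas -/

noncomputable def chi (c t : ℝ) : ℝ := if t < c then 1 else 0

lemma chi_mem (c t : ℝ) : chi c t ∈ Set.Icc (0:ℝ) 1 := by
  unfold chi; split <;> simp

lemma chi_eq_indicator (c : ℝ) (f : ℝ → ℝ) :
    (fun t => chi c t * f t) = (Set.Iio c).indicator f := by
  funext t; unfold chi; by_cases h : t < c <;> simp [Set.indicator, h]

lemma chi_mul_integrable (c : ℝ) (f : ℝ → ℝ) (hf : IntegrableOn f (Set.Ioc 0 1) volume) :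
    IntegrableOn (fun t => chi c t * f t) (Set.Ioc 0 1) volume := by
  rw [chi_eq_indicator]
  exact hf.indicator measurableSet_Iio

lemma sub_integrableOn (ψ : ℝ) : IntegrableOn (fun t => t - ψ) (Set.Ioc (0:ℝ) 1) volume := by
  apply Continuous.integrableOn_Ioc
  exact continuous_id.sub continuous_const

lemma inter_Iio (c : ℝ) (h1 : c ≤ 1) : Set.Ioc (0:ℝ) 1 ∩ Set.Iio c = Set.Ioo 0 c := by
  ext t; simp only [Set.mem_inter_iff, Set.mem_Ioc, Set.mem_Iio, Set.mem_Ioo]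
  constructor
  · rintro ⟨⟨h, _⟩, h'⟩; exact ⟨h, h'⟩
  · rintro ⟨h, h'⟩; exact ⟨⟨h, by linarith⟩, h'⟩

lemma chi_integral_eq (c : ℝ) (h1 : c ≤ 1) (f : ℝ → ℝ) :
    ∫ t in Set.Ioc (0:ℝ) 1, chi c t * f t = ∫ t in Set.Ioc (0:ℝ) c, f t := by
  rw [chi_eq_indicator]
  rw [MeasureTheory.setIntegral_indicator measurableSet_Iio, inter_Iio c h1,
    ← MeasureTheory.integral_Ioc_eq_integral_Ioo]

lemma chi_linear_integral (c ψ : ℝ) (h0 : 0 ≤ c) (h1 : c ≤ 1) :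
    ∫ t in Set.Ioc (0:ℝ) 1, chi c t * (t - ψ) = c^2/2 - ψ*c := by
  rw [chi_integral_eq c h1]
  rw [← intervalIntegral.integral_of_le h0]
  rw [intervalIntegral.integral_sub intervalIntegral.intervalIntegrable_id
    (intervalIntegrable_const (c := ψ))]
  rw [integral_id, intervalIntegral.integral_const]
  simp [smul_eq_mul]; ring

lemma bdd_mul_integrable (h : ℝ → ℝ) (hint : IntegrableOn h (Set.Ioc 0 1) volume)
    (hb : ∀ t ∈ Set.Ioc (0:ℝ) 1, h t ∈ Set.Icc (0:ℝ) 1) (ψ : ℝ) :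
    IntegrableOn (fun t => h t * (t - ψ)) (Set.Ioc 0 1) volume := by
  apply Integrable.mono' ((sub_integrableOn ψ).abs)
    (hint.aestronglyMeasurable.mul ((continuous_id.sub continuous_const).aestronglyMeasurable))
  rw [ae_restrict_iff' measurableSet_Ioc]
  filter_upwards with t ht
  have h1 := hb t ht
  show ‖h t * (t - ψ)‖ ≤ |t - ψ|
  rw [Real.norm_eq_abs, abs_mul]
  have : |h t| ≤ 1 := abs_le.2 ⟨by linarith [h1.1], h1.2⟩
  nlinarith [abs_nonneg (t - ψ), abs_nonneg (h t)]

lemma sq_identity (z ψ : ℝ) (hz : z ∈ Set.Icc (0:ℝ) 1) (hψ : ψ ∈ Set.Icc (0:ℝ) 1) :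
    2 * ∫ t in Set.Ioc (0:ℝ) 1, (chi z t - chi ψ t) * (t - ψ) = (z - ψ)^2 := by
  have e : ∀ t, (chi z t - chi ψ t) * (t - ψ) = chi z t * (t - ψ) - chi ψ t * (t - ψ) := by
    intro t; ring
  simp only [e]
  rw [MeasureTheory.integral_sub (chi_mul_integrable z _ (sub_integrableOn ψ))
    (chi_mul_integrable ψ _ (sub_integrableOn ψ)),
    chi_linear_integral z ψ hz.1 hz.2, chi_linear_integral ψ ψ hψ.1 hψ.2]
  ring

lemma rearrange (h : ℝ → ℝ) (hint : IntegrableOn h (Set.Ioc 0 1) volume)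
    (hb : ∀ t ∈ Set.Ioc (0:ℝ) 1, h t ∈ Set.Icc (0:ℝ) 1) (ψ : ℝ)
    (z : ℝ) (hz : z = ∫ s in Set.Ioc (0:ℝ) 1, h s) :
    ∫ t in Set.Ioc (0:ℝ) 1, chi z t * (t - ψ)
      ≤ ∫ t in Set.Ioc (0:ℝ) 1, h t * (t - ψ) := by
  have hz0 : 0 ≤ z := hz ▸ setIntegral_nonneg measurableSet_Ioc (fun t ht => (hb t ht).1)
  have hz1 : z ≤ 1 := by
    rw [hz]
    calc ∫ s in Set.Ioc (0:ℝ) 1, h s ≤ ∫ _ in Set.Ioc (0:ℝ) 1, (1:ℝ) := by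
          apply setIntegral_mono_on hint (integrableOn_const (by simp))
            measurableSet_Ioc (fun t ht => (hb t ht).2)
      _ = 1 := by simp
  have hmul := bdd_mul_integrable h hint hb ψ
  have hmulz := bdd_mul_integrable h hint hb z
  have hchizz : IntegrableOn (fun t => chi z t * (t - z)) (Set.Ioc 0 1) volume :=
    chi_mul_integrable z _ (sub_integrableOn z)
  have key : 0 ≤ ∫ t in Set.Ioc (0:ℝ) 1, (h t * (t - z) - chi z t * (t - z)) := by
    apply setIntegral_nonneg measurableSet_Ioc
    intro t ht
    unfold chi
    rcases lt_or_ge t z with h'|h'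
    · simp only [if_pos h']
      have := (hb t ht).2
      nlinarith
    · simp only [if_neg (not_lt.2 h')]
      have := (hb t ht).1
      nlinarith
  rw [MeasureTheory.integral_sub hmulz hchizz] at key
  have e1 : ∫ t in Set.Ioc (0:ℝ) 1, h t * (t - z)
      = (∫ t in Set.Ioc (0:ℝ) 1, h t * (t - ψ)) - (z - ψ) * z := by
    have e : ∀ t, h t * (t - z) = h t * (t - ψ) - (z - ψ) * h t := fun t => by ring
    simp only [e]
    rw [MeasureTheory.integral_sub hmul (hint.const_mul _),
      MeasureTheory.integral_const_mul, ← hz]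
  have e2 : ∫ t in Set.Ioc (0:ℝ) 1, chi z t * (t - z)
      = (∫ t in Set.Ioc (0:ℝ) 1, chi z t * (t - ψ)) - (z - ψ) * z := by
    rw [chi_linear_integral z z hz0 hz1, chi_linear_integral z ψ hz0 hz1]; ring
  rw [e1, e2] at key
  linarith

/-! ### Conditional-expectation lemmas -/

section CondExp

variable {Ω : Type*} {mH : MeasurableSpace Ω} {mΩ : MeasurableSpace Ω} {P : Measure Ω}
  [IsProbabilityMeasure P]

lemma cond_setIntegral {A : Set Ω} (hA : MeasurableSet A) (hH : mH ≤ mΩ)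
    {H : Set Ω} (hHm : MeasurableSet[mH] H) :
    ∫ ω in H, (P[A.indicator (fun _ => (1:ℝ))|mH]) ω ∂P = (P (A ∩ H)).toReal := by
  rw [setIntegral_condExp hH ((integrable_const (1:ℝ)).indicator hA) hHm]
  rw [setIntegral_indicator hA]
  simp [Set.inter_comm]; rfl

lemma min_integrable (t : ℝ) {A : Set Ω} :
    Integrable (fun ω => min (t - (P[A.indicator (fun _ => (1:ℝ))|mH]) ω) 0) P := by
  set Ψ := P[A.indicator (fun _ => (1:ℝ))|mH]
  have e : (fun ω => min (t - Ψ ω) 0) = fun ω => ((t - Ψ ω) - |t - Ψ ω|)/2 := by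
    funext ω
    rcases le_total (t - Ψ ω) 0 with h|h
    · rw [min_eq_left h, abs_of_nonpos h]; ring
    · rw [min_eq_right h, abs_of_nonneg h]; ring
  rw [e]
  exact (((integrable_const t).sub integrable_condExp).sub
    ((integrable_const t).sub integrable_condExp).abs).div_const 2

lemma ind_integrable (t : ℝ) {A : Set Ω} (hH : mH ≤ mΩ) {H : Set Ω}
    (hHm : MeasurableSet[mH] H) :
    Integrable (fun ω => H.indicator (fun _ => (1:ℝ)) ω
      * (t - (P[A.indicator (fun _ => (1:ℝ))|mH]) ω)) P := by
  set Ψ := P[A.indicator (fun _ => (1:ℝ))|mH]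
  have e : (fun ω => H.indicator (fun _ => (1:ℝ)) ω * (t - Ψ ω))
      = H.indicator (fun ω => t - Ψ ω) := by
    funext ω; by_cases h : ω ∈ H <;> simp [h]
  rw [e]
  exact ((integrable_const t).sub integrable_condExp).indicator (hH _ hHm)

lemma cwLoss_eq {A : Set Ω} (hA : MeasurableSet A) (hH : mH ≤ mΩ)
    {H : Set Ω} (hHm : MeasurableSet[mH] H) (t : ℝ) :
    cwLoss P A H t = (1 - t) * (P A).toReal
      + ∫ ω, H.indicator (fun _ => (1:ℝ)) ω * (t - (P[A.indicator (fun _ => (1:ℝ))|mH]) ω) ∂P := by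
  set Ψ := P[A.indicator (fun _ => (1:ℝ))|mH] with hΨ
  have hHm' : MeasurableSet[mΩ] H := hH _ hHm
  have h1 : (P (A ∩ Hᶜ)).toReal = (P A).toReal - (P (A ∩ H)).toReal := by
    have e := measure_inter_add_diff (μ := P) A hHm'
    rw [Set.diff_eq] at e
    have := congrArg ENNReal.toReal e
    rw [ENNReal.toReal_add (measure_ne_top P _) (measure_ne_top P _)] at this
    linarith
  have h2 : (P (Aᶜ ∩ H)).toReal = (P H).toReal - (P (A ∩ H)).toReal := by
    have e := measure_inter_add_diff (μ := P) H hA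
    rw [Set.diff_eq, Set.inter_comm H A, Set.inter_comm H Aᶜ] at e
    have := congrArg ENNReal.toReal e
    rw [ENNReal.toReal_add (measure_ne_top P _) (measure_ne_top P _)] at this
    linarith
  have h3 : ∫ ω, H.indicator (fun _ => (1:ℝ)) ω * (t - Ψ ω) ∂P
      = t * (P H).toReal - (P (A ∩ H)).toReal := by
    have e : ∀ ω, H.indicator (fun _ => (1:ℝ)) ω * (t - Ψ ω)
        = H.indicator (fun ω => t - Ψ ω) ω := by
      intro ω; by_cases h : ω ∈ H <;> simp [h]
    simp only [e]
    rw [integral_indicator hHm',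
      integral_sub (integrableOn_const (C := t) (measure_ne_top P H))
        integrable_condExp.integrableOn,
      setIntegral_const, ← hΨ, cond_setIntegral hA hH hHm]
    simp [smul_eq_mul, mul_comm, measureReal_def]
  unfold cwLoss
  rw [h1, h2, h3]
  ring

lemma bayes_eq {A : Set Ω} (hA : MeasurableSet A) (hH : mH ≤ mΩ) (t : ℝ) :
    bayesLoss P A mH t = (1 - t) * (P A).toReal
      + ∫ ω, min (t - (P[A.indicator (fun _ => (1:ℝ))|mH]) ω) 0 ∂P := by
  set Ψ := P[A.indicator (fun _ => (1:ℝ))|mH] with hΨ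
  have hmin_int : Integrable (fun ω => min (t - Ψ ω) 0) P := min_integrable t
  have hpt : ∀ (H : Set Ω) (ω : Ω),
      min (t - Ψ ω) 0 ≤ H.indicator (fun _ => (1:ℝ)) ω * (t - Ψ ω) := by
    intro H ω
    by_cases h : ω ∈ H
    · rw [Set.indicator_of_mem h, one_mul]; exact min_le_left _ _
    · rw [Set.indicator_of_notMem h, zero_mul]; exact min_le_right _ _
  have hlb : ∀ H : {H : Set Ω // MeasurableSet[mH] H},
      (1 - t) * (P A).toReal + ∫ ω, min (t - Ψ ω) 0 ∂P ≤ cwLoss P A H t := by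
    rintro ⟨H, hHm⟩
    rw [cwLoss_eq hA hH hHm t]
    have := integral_mono hmin_int (ind_integrable t hH hHm) (fun ω => hpt H ω)
    simp only [← hΨ]
    linarith
  have hbdd : BddBelow (Set.range fun H : {H : Set Ω // MeasurableSet[mH] H} =>
      cwLoss P A (↑H) t) := by
    refine ⟨(1 - t) * (P A).toReal + ∫ ω, min (t - Ψ ω) 0 ∂P, ?_⟩
    rintro _ ⟨H, rfl⟩
    exact hlb H
  apply le_antisymm
  · have hH₀ : MeasurableSet[mH] {ω | t < Ψ ω} :=
      measurableSet_lt measurable_const stronglyMeasurable_condExp.measurable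
    apply ciInf_le_of_le hbdd ⟨{ω | t < Ψ ω}, hH₀⟩
    rw [cwLoss_eq hA hH hH₀ t]
    have e : ∀ ω, ({ω | t < Ψ ω} : Set Ω).indicator (fun _ => (1:ℝ)) ω * (t - Ψ ω)
        = min (t - Ψ ω) 0 := by
      intro ω
      by_cases h : t < Ψ ω
      · have hmem : ω ∈ {ω | t < Ψ ω} := h
        rw [Set.indicator_of_mem hmem, one_mul, min_eq_left (by linarith)]
      · have hmem : ω ∉ {ω | t < Ψ ω} := h
        rw [Set.indicator_of_notMem hmem, zero_mul,
          min_eq_right (by simp only [Set.mem_setOf_eq, not_lt] at h; linarith)]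
    simp only [← hΨ, e, le_refl]
  · exact le_ciInf hlb

end CondExp

lemma measurable_probe {Ω : Type*} [mH : MeasurableSpace Ω] (F : ℝ × Ω → ℝ)
    (hF : StronglyMeasurable[(inferInstance : MeasurableSpace ℝ).prod mH] F) :
    StronglyMeasurable[mH] (fun ω => ∫ t in Set.Ioc (0:ℝ) 1, F (t, ω)) :=
  hF.integral_prod_left'

lemma chi_mul_min (t x : ℝ) : chi x t * (t - x) = min (t - x) 0 := by
  unfold chi
  by_cases h : t < x
  · rw [if_pos h, one_mul, min_eq_left (by linarith)]
  · rw [if_neg h, zero_mul, min_eq_right (by push_neg at h; linarith)]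

lemma chi_indicator_set {Ω : Type*} (g : Ω → ℝ) (t : ℝ) (ω : Ω) :
    ({ω | g ω > t} : Set Ω).indicator (fun _ => (1:ℝ)) ω = chi (g ω) t := by
  unfold chi
  by_cases h : t < g ω
  · rw [if_pos h]
    exact Set.indicator_of_mem (h : ω ∈ {ω | g ω > t}) (fun _ => (1:ℝ))
  · rw [if_neg h]
    exact Set.indicator_of_notMem (h : ω ∉ {ω | g ω > t}) (fun _ => (1:ℝ))

lemma chi_comp_measurable {α : Type*} [MeasurableSpace α] {g : α → ℝ} (hg : Measurable g)
    {u : α → ℝ} (hu : Measurable u) : Measurable (fun a => chi (g a) (u a)) := by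
  have e : (fun a => chi (g a) (u a)) = Set.indicator {a | u a < g a} (fun _ => (1:ℝ)) := by
    funext a; unfold chi
    by_cases h : u a < g a
    · rw [if_pos h]
      exact (Set.indicator_of_mem (h : a ∈ {a | u a < g a}) (fun _ => (1:ℝ))).symm
    · rw [if_neg h]
      exact (Set.indicator_of_notMem (h : a ∉ {a | u a < g a}) (fun _ => (1:ℝ))).symm
  rw [e]; exact measurable_const.indicator (measurableSet_lt hu hg)
lemma probing_main
    {Ω : Type*} {mH : MeasurableSpace Ω} {mΩ : MeasurableSpace Ω} {P : Measure Ω}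
    [IsProbabilityMeasure P]
    {A : Set Ω} (hA : MeasurableSet[mΩ] A) (hH : mH ≤ mΩ)
    (Hfam : ℝ → Set Ω)
    (hHfam : ∀ t ∈ Set.Ioo (0 : ℝ) 1, MeasurableSet[mH] (Hfam t))
    (hjoint : MeasurableSet[(inferInstance : MeasurableSpace ℝ).prod mH]
      {p : ℝ × Ω | p.1 ∈ Set.Ioo (0 : ℝ) 1 ∧ p.2 ∈ Hfam p.1})
    (Z : Ω → ℝ)
    (hZ : ∀ ω, Z ω = ∫ t in (0 : ℝ)..1, (Hfam t).indicator (fun _ => (1 : ℝ)) ω) :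
    (∫ ω, (Z ω - (P[A.indicator (fun _ => (1 : ℝ)) | mH]) ω) ^ 2 ∂P
        = 2 * ∫ t in (0 : ℝ)..1, (cwLoss P A {ω | Z ω > t} t - bayesLoss P A mH t))
    ∧ 2 * ∫ t in (0 : ℝ)..1, (cwLoss P A {ω | Z ω > t} t - bayesLoss P A mH t)
        ≤ 2 * ∫ t in (0 : ℝ)..1, (cwLoss P A (Hfam t) t - bayesLoss P A mH t) := by
  set Ψ := P[A.indicator (fun _ => (1 : ℝ)) | mH] with hΨdef
  set S : Set (ℝ × Ω) := {p : ℝ × Ω | p.1 ∈ Set.Ioo (0 : ℝ) 1 ∧ p.2 ∈ Hfam p.1} with hSdef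
  set F : ℝ × Ω → ℝ := S.indicator (fun _ => 1) with hFdef
  have hFsm : StronglyMeasurable[(inferInstance : MeasurableSpace ℝ).prod mH] F :=
    stronglyMeasurable_const.indicator hjoint
  have hprodle : (inferInstance : MeasurableSpace ℝ).prod mH
      ≤ (inferInstance : MeasurableSpace ℝ).prod mΩ := by
    unfold MeasurableSpace.prod
    exact sup_le_sup le_rfl (MeasurableSpace.comap_mono hH)
  have hFsm' : StronglyMeasurable F := hFsm.mono hprodle
  have hF01 : ∀ p, F p ∈ Set.Icc (0:ℝ) 1 := by
    intro p
    rw [hFdef]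
    by_cases h : p ∈ S
    · rw [Set.indicator_of_mem h]; exact ⟨zero_le_one, le_refl 1⟩
    · rw [Set.indicator_of_notMem h]; exact ⟨le_refl 0, zero_le_one⟩
  have hFt : ∀ ω, IntegrableOn (fun t => F (t, ω)) (Set.Ioc 0 1) volume := by
    intro ω
    apply Integrable.mono' (integrable_const (1:ℝ))
      ((hFsm'.comp_measurable (measurable_prodMk_right)).aestronglyMeasurable)
    filter_upwards with t
    show ‖F (t, ω)‖ ≤ 1
    rw [Real.norm_eq_abs, abs_le]
    exact ⟨by linarith [(hF01 (t, ω)).1], (hF01 (t, ω)).2⟩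
  have hZ' : ∀ ω, Z ω = ∫ t in Set.Ioc (0:ℝ) 1, F (t, ω) := by
    intro ω
    rw [hZ ω, intervalIntegral.integral_of_le (zero_le_one)]
    apply setIntegral_congr_ae measurableSet_Ioc
    have h1 : ∀ᵐ t : ℝ, t ≠ 1 := by
      rw [ae_iff]
      have : {a : ℝ | ¬ a ≠ 1} = {1} := by ext a; simp
      rw [this]
      exact Real.volume_singleton
    filter_upwards [h1] with t ht hmem
    have htIoo : t ∈ Set.Ioo (0:ℝ) 1 := ⟨hmem.1, lt_of_le_of_ne hmem.2 ht⟩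
    by_cases hω : ω ∈ Hfam t
    · have hm1 : (t, ω) ∈ S := ⟨htIoo, hω⟩
      rw [Set.indicator_of_mem hω]
      exact (Set.indicator_of_mem hm1 (fun _ => (1:ℝ))).symm
    · have hm1 : (t, ω) ∉ S := fun hc => hω hc.2
      rw [Set.indicator_of_notMem hω]
      exact (Set.indicator_of_notMem hm1 (fun _ => (1:ℝ))).symm
  have hZsm : StronglyMeasurable[mH] Z := by
    have e : Z = fun ω => ∫ t in Set.Ioc (0:ℝ) 1, F (t, ω) := funext hZ'
    rw [e]
    exact measurable_probe (mH := mH) F hFsm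
  have hZm : Measurable[mΩ] Z := (hZsm.mono hH).measurable
  have hZ01 : ∀ ω, Z ω ∈ Set.Icc (0:ℝ) 1 := by
    intro ω
    rw [hZ' ω]
    constructor
    · exact setIntegral_nonneg measurableSet_Ioc (fun t _ => (hF01 (t, ω)).1)
    · calc ∫ t in Set.Ioc (0:ℝ) 1, F (t, ω) ≤ ∫ _ in Set.Ioc (0:ℝ) 1, (1:ℝ) :=
            integral_mono (hFt ω) (integrableOn_const (by simp))
              (fun t => (hF01 (t, ω)).2)
        _ = 1 := by simp
  have hΨsm : StronglyMeasurable[mH] Ψ := stronglyMeasurable_condExp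
  have hΨm : Measurable[mΩ] Ψ := (hΨsm.mono hH).measurable
  have hΨint : Integrable Ψ P := integrable_condExp
  have hΨ01 : ∀ᵐ ω ∂P, Ψ ω ∈ Set.Icc (0:ℝ) 1 := by
    have h0 : 0 ≤ᵐ[P] Ψ := by
      apply condExp_nonneg
      filter_upwards with ω
      exact Set.indicator_nonneg (fun _ _ => zero_le_one) ω
    have h1 : Ψ ≤ᵐ[P] fun _ => (1:ℝ) := by
      have hmono := condExp_mono (m := mH) (μ := P)
        ((integrable_const (1:ℝ)).indicator hA) (integrable_const (1:ℝ))
        (Filter.Eventually.of_forall (fun ω => Set.indicator_le_self' (fun _ _ => zero_le_one) ω))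
      have hc := condExp_const (μ := P) hH (1:ℝ)
      filter_upwards [hmono] with ω hω
      calc Ψ ω ≤ (P[(fun _ => (1:ℝ))|mH]) ω := hω
        _ = 1 := by rw [hc]
    filter_upwards [h0, h1] with ω e0 e1
    exact ⟨e0, e1⟩
  -- product-space functions
  set Φ : ℝ × Ω → ℝ := fun p => (chi (Z p.2) p.1 - chi (Ψ p.2) p.1) * (p.1 - Ψ p.2) with hΦdef
  set Φ' : ℝ × Ω → ℝ := fun p => (F p - chi (Ψ p.2) p.1) * (p.1 - Ψ p.2) with hΦ'def
  have hΦm : Measurable Φ :=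
    ((chi_comp_measurable (hZm.comp measurable_snd) measurable_fst).sub
      (chi_comp_measurable (hΨm.comp measurable_snd) measurable_fst)).mul
      (measurable_fst.sub (hΨm.comp measurable_snd))
  have hΦ'm : Measurable Φ' :=
    ((hFsm'.measurable.sub
      (chi_comp_measurable (hΨm.comp measurable_snd) measurable_fst)).mul
      (measurable_fst.sub (hΨm.comp measurable_snd)))
  have hboundint : Integrable (fun p : ℝ × Ω => |p.1| + |Ψ p.2|)
      ((volume.restrict (Set.Ioc (0:ℝ) 1)).prod P) := by
    apply Integrable.add
    · have h1 : Integrable (fun t : ℝ => |t|) (volume.restrict (Set.Ioc (0:ℝ) 1)) :=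
        continuous_abs.integrableOn_Ioc
      have := h1.mul_prod (integrable_const (1:ℝ) (μ := P))
      simpa using this
    · have := (integrable_const (1:ℝ) (μ := volume.restrict (Set.Ioc (0:ℝ) 1))).mul_prod
        hΨint.abs
      simpa using this
  have habs : ∀ a b : ℝ, |a - b| ≤ |a| + |b| := by
    intro a b
    rw [sub_eq_add_neg]
    refine (abs_add_le _ _).trans ?_
    rw [abs_neg]
  have hΦbd : ∀ p : ℝ × Ω, ‖Φ p‖ ≤ |p.1| + |Ψ p.2| := by
    intro p
    simp only [hΦdef]
    rw [Real.norm_eq_abs, abs_mul]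
    have a1 := chi_mem (Z p.2) p.1
    have a2 := chi_mem (Ψ p.2) p.1
    have h1 : |chi (Z p.2) p.1 - chi (Ψ p.2) p.1| ≤ 1 :=
      abs_le.2 ⟨by linarith [a1.1, a2.2], by linarith [a1.2, a2.1]⟩
    calc |chi (Z p.2) p.1 - chi (Ψ p.2) p.1| * |p.1 - Ψ p.2|
        ≤ 1 * |p.1 - Ψ p.2| := mul_le_mul_of_nonneg_right h1 (abs_nonneg _)
      _ = |p.1 - Ψ p.2| := one_mul _
      _ ≤ |p.1| + |Ψ p.2| := habs _ _
  have hΦ'bd : ∀ p : ℝ × Ω, ‖Φ' p‖ ≤ |p.1| + |Ψ p.2| := by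
    intro p
    simp only [hΦ'def]
    rw [Real.norm_eq_abs, abs_mul]
    have a1 := hF01 p
    have a2 := chi_mem (Ψ p.2) p.1
    have h1 : |F p - chi (Ψ p.2) p.1| ≤ 1 :=
      abs_le.2 ⟨by linarith [a1.1, a2.2], by linarith [a1.2, a2.1]⟩
    calc |F p - chi (Ψ p.2) p.1| * |p.1 - Ψ p.2|
        ≤ 1 * |p.1 - Ψ p.2| := mul_le_mul_of_nonneg_right h1 (abs_nonneg _)
      _ = |p.1 - Ψ p.2| := one_mul _
      _ ≤ |p.1| + |Ψ p.2| := habs _ _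
  have hΦint : Integrable Φ ((volume.restrict (Set.Ioc (0:ℝ) 1)).prod P) :=
    Integrable.mono' hboundint hΦm.aestronglyMeasurable (Filter.Eventually.of_forall hΦbd)
  have hΦ'int : Integrable Φ' ((volume.restrict (Set.Ioc (0:ℝ) 1)).prod P) :=
    Integrable.mono' hboundint hΦ'm.aestronglyMeasurable (Filter.Eventually.of_forall hΦ'bd)
  have hΦintω : Integrable (fun ω => ∫ t in Set.Ioc (0:ℝ) 1, Φ (t, ω)) P :=
    hΦint.integral_prod_right
  have hΦ'intω : Integrable (fun ω => ∫ t in Set.Ioc (0:ℝ) 1, Φ' (t, ω)) P :=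
    hΦ'int.integral_prod_right
  have swapΦ : ∫ ω, (∫ t in Set.Ioc (0:ℝ) 1, Φ (t, ω)) ∂P
      = ∫ t in Set.Ioc (0:ℝ) 1, (∫ ω, Φ (t, ω) ∂P) :=
    (MeasureTheory.integral_integral_swap (f := fun t ω => Φ (t, ω)) (by exact hΦint)).symm
  have swapΦ' : ∫ ω, (∫ t in Set.Ioc (0:ℝ) 1, Φ' (t, ω)) ∂P
      = ∫ t in Set.Ioc (0:ℝ) 1, (∫ ω, Φ' (t, ω) ∂P) :=
    (MeasureTheory.integral_integral_swap (f := fun t ω => Φ' (t, ω)) (by exact hΦ'int)).symm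
  -- sections of Φ
  have hsec : ∀ t : ℝ, ∫ ω, Φ (t, ω) ∂P
      = cwLoss P A {ω | Z ω > t} t - bayesLoss P A mH t := by
    intro t
    have hZt : MeasurableSet[mH] {ω | Z ω > t} :=
      measurableSet_lt measurable_const hZsm.measurable
    have hii := ind_integrable (P := P) t (A := A) hH hZt
    rw [← hΨdef] at hii
    have hmi := min_integrable (P := P) (mH := mH) t (A := A)
    rw [← hΨdef] at hmi
    rw [cwLoss_eq hA hH hZt t, bayes_eq hA hH t, ← hΨdef]
    have e : (fun ω => Φ (t, ω)) = fun ω =>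
        ({ω | Z ω > t} : Set Ω).indicator (fun _ => (1:ℝ)) ω * (t - Ψ ω)
          - min (t - Ψ ω) 0 := by
      funext ω
      simp only [hΦdef]
      rw [chi_indicator_set Z t ω, ← chi_mul_min t (Ψ ω)]
      ring
    rw [e, integral_sub hii hmi]
    ring
  -- the square identity
  have sqid : ∀ᵐ ω ∂P, (Z ω - Ψ ω)^2 = 2 * ∫ t in Set.Ioc (0:ℝ) 1, Φ (t, ω) := by
    filter_upwards [hΨ01] with ω hψ
    have := sq_identity (Z ω) (Ψ ω) (hZ01 ω) hψ
    rw [← this]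
  have main_eq : ∫ ω, (Z ω - Ψ ω)^2 ∂P
      = 2 * ∫ t in Set.Ioc (0:ℝ) 1,
          (cwLoss P A {ω | Z ω > t} t - bayesLoss P A mH t) := by
    rw [integral_congr_ae sqid, MeasureTheory.integral_const_mul, swapΦ]
    simp only [hsec]
  -- sections of Φ' versus the family losses
  have hne1 : ∀ᵐ t : ℝ, t ≠ 1 := by
    rw [ae_iff]
    have e : {a : ℝ | ¬ a ≠ 1} = {1} := by ext a; simp
    rw [e]
    exact Real.volume_singleton
  have hsec' : ∫ t in Set.Ioc (0:ℝ) 1,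
        (cwLoss P A (Hfam t) t - bayesLoss P A mH t)
      = ∫ t in Set.Ioc (0:ℝ) 1, (∫ ω, Φ' (t, ω) ∂P) := by
    apply setIntegral_congr_ae measurableSet_Ioc
    filter_upwards [hne1] with t ht hmem
    have htIoo : t ∈ Set.Ioo (0:ℝ) 1 := ⟨hmem.1, lt_of_le_of_ne hmem.2 ht⟩
    have hii := ind_integrable (P := P) t (A := A) hH (hHfam t htIoo)
    rw [← hΨdef] at hii
    have hmi := min_integrable (P := P) (mH := mH) t (A := A)
    rw [← hΨdef] at hmi
    rw [cwLoss_eq hA hH (hHfam t htIoo) t, bayes_eq hA hH t, ← hΨdef]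
    have e : (fun ω => Φ' (t, ω)) = fun ω =>
        (Hfam t).indicator (fun _ => (1:ℝ)) ω * (t - Ψ ω) - min (t - Ψ ω) 0 := by
      funext ω
      simp only [hΦ'def]
      have eF : F (t, ω) = (Hfam t).indicator (fun _ => (1:ℝ)) ω := by
        by_cases hω : ω ∈ Hfam t
        · have hm1 : (t, ω) ∈ S := ⟨htIoo, hω⟩
          rw [Set.indicator_of_mem hω]
          exact Set.indicator_of_mem hm1 (fun _ => (1:ℝ))
        · have hm1 : (t, ω) ∉ S := fun hc => hω hc.2
          rw [Set.indicator_of_notMem hω]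
          exact Set.indicator_of_notMem hm1 (fun _ => (1:ℝ))
      rw [eF, ← chi_mul_min t (Ψ ω)]
      ring
    rw [e, integral_sub hii hmi]
    ring
  -- pointwise (in ω) comparison
  have hωineq : ∀ ω, (∫ t in Set.Ioc (0:ℝ) 1, Φ (t, ω))
      ≤ ∫ t in Set.Ioc (0:ℝ) 1, Φ' (t, ω) := by
    intro ω
    have hbF : ∀ t ∈ Set.Ioc (0:ℝ) 1, F (t, ω) ∈ Set.Icc (0:ℝ) 1 := fun t _ => hF01 (t, ω)
    have hre := rearrange (fun t => F (t, ω)) (hFt ω) hbF (Ψ ω) (Z ω) (hZ' ω)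
    have d1 : ∫ t in Set.Ioc (0:ℝ) 1, Φ (t, ω)
        = (∫ t in Set.Ioc (0:ℝ) 1, chi (Z ω) t * (t - Ψ ω))
          - ∫ t in Set.Ioc (0:ℝ) 1, chi (Ψ ω) t * (t - Ψ ω) := by
      have e : (fun t => Φ (t, ω))
          = fun t => chi (Z ω) t * (t - Ψ ω) - chi (Ψ ω) t * (t - Ψ ω) := by
        funext t; simp only [hΦdef]; ring
      rw [e, integral_sub (chi_mul_integrable _ _ (sub_integrableOn _))
        (chi_mul_integrable _ _ (sub_integrableOn _))]
    have d2 : ∫ t in Set.Ioc (0:ℝ) 1, Φ' (t, ω)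
        = (∫ t in Set.Ioc (0:ℝ) 1, F (t, ω) * (t - Ψ ω))
          - ∫ t in Set.Ioc (0:ℝ) 1, chi (Ψ ω) t * (t - Ψ ω) := by
      have e : (fun t => Φ' (t, ω))
          = fun t => F (t, ω) * (t - Ψ ω) - chi (Ψ ω) t * (t - Ψ ω) := by
        funext t; simp only [hΦ'def]; ring
      rw [e, integral_sub (bdd_mul_integrable _ (hFt ω) hbF _)
        (chi_mul_integrable _ _ (sub_integrableOn _))]
    rw [d1, d2]
    linarith [hre]
  have main_ineq : ∫ t in Set.Ioc (0:ℝ) 1,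
        (cwLoss P A {ω | Z ω > t} t - bayesLoss P A mH t)
      ≤ ∫ t in Set.Ioc (0:ℝ) 1,
        (cwLoss P A (Hfam t) t - bayesLoss P A mH t) := by
    have e3 : ∫ t in Set.Ioc (0:ℝ) 1,
        (cwLoss P A {ω | Z ω > t} t - bayesLoss P A mH t)
        = ∫ ω, (∫ t in Set.Ioc (0:ℝ) 1, Φ (t, ω)) ∂P := by
      rw [swapΦ]; simp only [hsec]
    rw [e3, hsec', ← swapΦ']
    exact integral_mono hΦintω hΦ'intω hωineq
  constructor
  · rw [intervalIntegral.integral_of_le zero_le_one]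
    exact main_eq
  · rw [intervalIntegral.integral_of_le zero_le_one,
      intervalIntegral.integral_of_le zero_le_one]
    have h2 : (0:ℝ) ≤ 2 := by norm_num
    exact mul_le_mul_of_nonneg_left main_ineq h2

/-- **Theorem 2 (probing reduction, after Langford & Zadrozny)**: given a jointly measurable
family of classifiers `H(t) ∈ ℋ`, `t ∈ (0, 1)`, the probing predictor
`Z(ω) = ∫₀¹ 1_{H(t)}(ω) dt` satisfies
`E[(Z − Ψ)²] = 2 ∫₀¹ (L({Z > t}, t) − L*_ℋ(t)) dt ≤ 2 ∫₀¹ (L(H(t), t) − L*_ℋ(t)) dt`. -/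
theorem probing_reduction
    {Ω : Type*} {mΩ : MeasurableSpace Ω} {P : Measure Ω} [IsProbabilityMeasure P]
    {A : Set Ω} (hA : MeasurableSet A) (hA0 : 0 < P A) (hA1 : P A < 1)
    {mH : MeasurableSpace Ω} (hH : mH ≤ mΩ) (hAH : ¬ MeasurableSet[mH] A)
    (Hfam : ℝ → Set Ω)
    (hHfam : ∀ t ∈ Set.Ioo (0 : ℝ) 1, MeasurableSet[mH] (Hfam t))
    (hjoint : MeasurableSet[(inferInstance : MeasurableSpace ℝ).prod mH]
      {p : ℝ × Ω | p.1 ∈ Set.Ioo (0 : ℝ) 1 ∧ p.2 ∈ Hfam p.1})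
    (Z : Ω → ℝ)
    (hZ : ∀ ω, Z ω = ∫ t in (0 : ℝ)..1, (Hfam t).indicator (fun _ => (1 : ℝ)) ω) :
    (∫ ω, (Z ω - (P[A.indicator (fun _ => (1 : ℝ)) | mH]) ω) ^ 2 ∂P
        = 2 * ∫ t in (0 : ℝ)..1, (cwLoss P A {ω | Z ω > t} t - bayesLoss P A mH t))
    ∧ 2 * ∫ t in (0 : ℝ)..1, (cwLoss P A {ω | Z ω > t} t - bayesLoss P A mH t)
        ≤ 2 * ∫ t in (0 : ℝ)..1, (cwLoss P A (Hfam t) t - bayesLoss P A mH t) :=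
  probing_main hA hH Hfam hHfam hjoint Z hZ
end

section
/- Let 𝒢 be a sub-σ-field of ℋ, Ψ = P[A | 𝒢] a version of the conditional probability with values in [0,1], and B(t) = L({Ψ > t}, t) its Brier curve. Then for every (1−P[A])-quantile t* of Ψ, i.e. every t* with P[Ψ < t*] ≤ 1 − P[A] ≤ P[Ψ ≤ t*], the Brier curve attains its maximum at t*: max_{0 ≤ t ≤ 1} B(t) = B(t*). -/
open MeasureTheory

theorem brier_aux {Ω : Type*} (mG : MeasurableSpace Ω) [mΩ : MeasurableSpace Ω]
    (hGΩ : mG ≤ mΩ) {P : Measure Ω} [IsProbabilityMeasure P]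
    {A : Set Ω} (hA : MeasurableSet A) (hA0 : 0 < P A) (hA1 : P A < 1)
    {Ψ : Ω → ℝ} (hΨm : Measurable[mG] Ψ) (hΨ01 : ∀ ω, Ψ ω ∈ Set.Icc (0 : ℝ) 1)
    (hΨ : Ψ =ᵐ[P] P[A.indicator (fun _ => (1 : ℝ)) | mG])
    (B : ℝ → ℝ) (hB : ∀ t, B t = cwLoss P A {ω | Ψ ω > t} t)
    (tstar : ℝ)
    (hquant : (P {ω | Ψ ω < tstar}).toReal ≤ 1 - (P A).toReal
      ∧ 1 - (P A).toReal ≤ (P {ω | Ψ ω ≤ tstar}).toReal) :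
    tstar ∈ Set.Icc (0 : ℝ) 1 ∧ ∀ t ∈ Set.Icc (0 : ℝ) 1, B t ≤ B tstar := by
  obtain ⟨hq1, hq2⟩ := hquant
  have hΨM : Measurable Ψ := hΨm.mono hGΩ le_rfl
  have hPA0 : 0 < (P A).toReal := ENNReal.toReal_pos hA0.ne' (measure_ne_top P A)
  have hPA1 : (P A).toReal < 1 := by
    have := (ENNReal.toReal_lt_toReal (measure_ne_top P A) (by simp)).mpr hA1
    simpa using this
  -- t* ∈ [0,1]
  have ht0 : 0 ≤ tstar := by
    by_contra h
    push_neg at h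
    have hempty : {ω | Ψ ω ≤ tstar} = ∅ := by
      ext ω; simp only [Set.mem_setOf_eq, Set.mem_empty_iff_false, iff_false, not_le]
      exact lt_of_lt_of_le h (hΨ01 ω).1
    rw [hempty] at hq2
    simp at hq2
    linarith
  have ht1 : tstar ≤ 1 := by
    by_contra h
    push_neg at h
    have huniv : {ω | Ψ ω < tstar} = Set.univ := by
      ext ω; simp only [Set.mem_setOf_eq, Set.mem_univ, iff_true]
      exact lt_of_le_of_lt (hΨ01 ω).2 h
    rw [huniv] at hq1
    simp at hq1
    linarith
  -- integrability facts
  have hΨint : Integrable Ψ P := by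
    refine (integrable_const (1 : ℝ)).mono' hΨM.aestronglyMeasurable ?_
    filter_upwards with ω
    rw [Real.norm_eq_abs, abs_le]
    exact ⟨by linarith [(hΨ01 ω).1], (hΨ01 ω).2⟩
  have hmaxint : ∀ t : ℝ, Integrable (fun ω => max (t - Ψ ω) 0) P := by
    intro t
    refine (integrable_const (|t| + 1)).mono'
      ((hΨM.const_sub t).max measurable_const).aestronglyMeasurable ?_
    filter_upwards with ω
    rw [Real.norm_eq_abs, abs_le]
    constructor
    · have h1 : (0:ℝ) ≤ max (t - Ψ ω) 0 := le_max_right _ _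
      have h2 : (0:ℝ) ≤ |t| + 1 := by positivity
      linarith
    · refine max_le ?_ (by positivity)
      have := (hΨ01 ω).1
      linarith [le_abs_self t]
  have hf : Integrable (A.indicator (fun _ => (1:ℝ))) P := (integrable_const 1).indicator hA
  haveI : SigmaFinite (P.trim hGΩ) := by infer_instance
  -- key conditional expectation identity
  have key : ∀ H : Set Ω, MeasurableSet[mG] H →
      ∫ x in H, Ψ x ∂P = (P (A ∩ H)).toReal := by
    intro H hHm
    have h1 : ∫ x in H, Ψ x ∂P
        = ∫ x in H, (P[A.indicator (fun _ => (1:ℝ))|mG]) x ∂P :=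
      setIntegral_congr_ae (hGΩ _ hHm) (hΨ.mono fun x hx _ => hx)
    rw [h1, setIntegral_condExp hGΩ hf hHm, setIntegral_indicator hA]
    simp [Set.inter_comm, Measure.real]
  -- B t = (1 - P A) * t - ∫ max (t - Ψ) 0
  have hBt : ∀ t : ℝ, B t = (1 - (P A).toReal) * t - ∫ ω, max (t - Ψ ω) 0 ∂P := by
    intro t
    set S : Set Ω := {ω | Ψ ω > t} with hSdef
    have hSm : MeasurableSet[mG] S := hΨm measurableSet_Ioi
    have hSM : MeasurableSet S := hGΩ _ hSm
    have hI1 : ∫ x in Sᶜ, Ψ x ∂P = (P (A ∩ Sᶜ)).toReal := key _ hSm.compl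
    have hI2 : ∫ x in S, Ψ x ∂P = (P (A ∩ S)).toReal := key _ hSm
    have htot : (∫ x in S, Ψ x ∂P) + ∫ x in Sᶜ, Ψ x ∂P = (P A).toReal := by
      rw [integral_add_compl hSM hΨint]
      simpa using key Set.univ MeasurableSet.univ
    -- P(Aᶜ ∩ S) = P S - P(A ∩ S)
    have hsplit : (P (Aᶜ ∩ S)).toReal = (P S).toReal - (P (A ∩ S)).toReal := by
      have h := measure_inter_add_diff (μ := P) S hA
      have hd : S \ A = Aᶜ ∩ S := by ext ω; simp [Set.mem_diff, And.comm]
      rw [hd] at h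
      have h' := congrArg ENNReal.toReal h
      rw [ENNReal.toReal_add (measure_ne_top _ _) (measure_ne_top _ _),
        Set.inter_comm S A] at h'
      linarith
    -- ∫ max (t - Ψ) 0 = ∫_{Sᶜ} (t - Ψ)
    have hφ : ∫ ω, max (t - Ψ ω) 0 ∂P
        = t * (P Sᶜ).toReal - ∫ x in Sᶜ, Ψ x ∂P := by
      have h0 : ∫ ω, max (t - Ψ ω) 0 ∂P
          = (∫ x in S, max (t - Ψ x) 0 ∂P) + ∫ x in Sᶜ, max (t - Ψ x) 0 ∂P :=
        (integral_add_compl hSM (hmaxint t)).symm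
      have hS0 : ∫ x in S, max (t - Ψ x) 0 ∂P = 0 := by
        rw [setIntegral_congr_fun hSM (g := fun _ => (0:ℝ))]
        · simp
        · intro x hx
          simp only [hSdef, Set.mem_setOf_eq] at hx
          simp [max_eq_right (by linarith : t - Ψ x ≤ 0)]
      have hSc : ∫ x in Sᶜ, max (t - Ψ x) 0 ∂P = ∫ x in Sᶜ, (t - Ψ x) ∂P := by
        refine setIntegral_congr_fun hSM.compl ?_
        intro x hx
        simp only [hSdef, Set.mem_compl_iff, Set.mem_setOf_eq, not_lt] at hx
        simp [max_eq_left (by linarith : (0:ℝ) ≤ t - Ψ x)]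
      rw [h0, hS0, hSc, integral_sub (integrable_const t).restrict hΨint.restrict]
      simp [mul_comm, Measure.real]
    have hPSc : (P S).toReal + (P Sᶜ).toReal = 1 := by
      rw [← ENNReal.toReal_add (measure_ne_top _ _) (measure_ne_top _ _),
        measure_add_measure_compl hSM]
      simp
    rw [hB t, cwLoss]
    show (1 - t) * (P (A ∩ Sᶜ)).toReal + t * (P (Aᶜ ∩ S)).toReal = _
    rw [← hI1, hsplit, hφ, ← hI2]
    linear_combination (-t) * htot + t * hPSc
  -- comparison step
  have hle_m : MeasurableSet {ω | Ψ ω ≤ tstar} := hΨM measurableSet_Iic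
  have hlt_m : MeasurableSet {ω | Ψ ω < tstar} := hΨM measurableSet_Iio
  refine ⟨⟨ht0, ht1⟩, ?_⟩
  intro t ht
  rw [hBt t, hBt tstar]
  rcases le_total tstar t with hts | hts
  · have hptwise : ∀ ω, {ω | Ψ ω ≤ tstar}.indicator (fun _ => t - tstar) ω
        ≤ max (t - Ψ ω) 0 - max (tstar - Ψ ω) 0 := by
      intro ω
      rw [Set.indicator_apply]
      split_ifs with h
      · simp only [Set.mem_setOf_eq] at h
        rw [max_eq_left (show (0:ℝ) ≤ t - Ψ ω by linarith), max_eq_left (show (0:ℝ) ≤ tstar - Ψ ω by linarith)]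
        ring_nf
        exact le_refl _
      · simp only [Set.mem_setOf_eq, not_le] at h
        rw [max_eq_right (show tstar - Ψ ω ≤ 0 by linarith)]
        have := le_max_right (t - Ψ ω) (0:ℝ)
        linarith
    have hintble : Integrable (fun ω => max (t - Ψ ω) 0 - max (tstar - Ψ ω) 0) P :=
      (hmaxint t).sub (hmaxint tstar)
    have hint : (t - tstar) * (P {ω | Ψ ω ≤ tstar}).toReal
        ≤ (∫ ω, max (t - Ψ ω) 0 ∂P) - ∫ ω, max (tstar - Ψ ω) 0 ∂P := by
      have h := integral_mono ((integrable_const (t - tstar)).indicator hle_m)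
        hintble hptwise
      rw [integral_indicator_const _ hle_m, smul_eq_mul, mul_comm,
        integral_sub (hmaxint t) (hmaxint tstar)] at h
      simp only [Measure.real] at h
      linarith
    have hmul : (t - tstar) * (1 - (P A).toReal)
        ≤ (t - tstar) * (P {ω | Ψ ω ≤ tstar}).toReal :=
      mul_le_mul_of_nonneg_left hq2 (by linarith)
    linarith
  · have hptwise : ∀ ω, max (tstar - Ψ ω) 0 - max (t - Ψ ω) 0
        ≤ {ω | Ψ ω < tstar}.indicator (fun _ => tstar - t) ω := by
      intro ω
      rw [Set.indicator_apply]
      split_ifs with h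
      · simp only [Set.mem_setOf_eq] at h
        rcases le_total (Ψ ω) t with h2 | h2
        · rw [max_eq_left (show (0:ℝ) ≤ tstar - Ψ ω by linarith),
            max_eq_left (show (0:ℝ) ≤ t - Ψ ω by linarith)]
          ring_nf
          exact le_refl _
        · rw [max_eq_left (show (0:ℝ) ≤ tstar - Ψ ω by linarith),
            max_eq_right (show t - Ψ ω ≤ 0 by linarith)]
          linarith
      · simp only [Set.mem_setOf_eq, not_lt] at h
        rw [max_eq_right (show tstar - Ψ ω ≤ 0 by linarith)]
        have := le_max_right (t - Ψ ω) (0:ℝ)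
        linarith
    have hintble : Integrable (fun ω => max (tstar - Ψ ω) 0 - max (t - Ψ ω) 0) P :=
      (hmaxint tstar).sub (hmaxint t)
    have hint : (∫ ω, max (tstar - Ψ ω) 0 ∂P) - ∫ ω, max (t - Ψ ω) 0 ∂P
        ≤ (tstar - t) * (P {ω | Ψ ω < tstar}).toReal := by
      have h := integral_mono hintble
        ((integrable_const (tstar - t)).indicator hlt_m) hptwise
      rw [integral_indicator_const _ hlt_m, smul_eq_mul, mul_comm,
        integral_sub (hmaxint tstar) (hmaxint t)] at h
      simp only [Measure.real] at h
      linarith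
    have hmul : (tstar - t) * (P {ω | Ψ ω < tstar}).toReal
        ≤ (tstar - t) * (1 - (P A).toReal) :=
      mul_le_mul_of_nonneg_left hq1 (by linarith)
    linarith

/-- **Proposition 7, item 5 (maximiser of the Brier curve)**: for a `[0,1]`-valued version
`Ψ` of `P[A | 𝒢]`, `𝒢 ⊆ ℋ`, every `(1 − P[A])`-quantile `t*` of `Ψ` lies in `[0, 1]` and
maximises the Brier curve `B(t) = L({Ψ > t}, t)` over `[0, 1]`:
`max_{0 ≤ t ≤ 1} B(t) = B(t*)`. -/
theorem brier_curve_max_at_quantile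
    {Ω : Type*} {mΩ : MeasurableSpace Ω} {P : Measure Ω} [IsProbabilityMeasure P]
    {A : Set Ω} (hA : MeasurableSet A) (hA0 : 0 < P A) (hA1 : P A < 1)
    {mH : MeasurableSpace Ω} (hH : mH ≤ mΩ) (hAH : ¬ MeasurableSet[mH] A)
    {mG : MeasurableSpace Ω} (hG : mG ≤ mH)
    {Ψ : Ω → ℝ} (hΨm : Measurable[mG] Ψ) (hΨ01 : ∀ ω, Ψ ω ∈ Set.Icc (0 : ℝ) 1)
    (hΨ : Ψ =ᵐ[P] P[A.indicator (fun _ => (1 : ℝ)) | mG])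
    (B : ℝ → ℝ) (hB : ∀ t, B t = cwLoss P A {ω | Ψ ω > t} t)
    (tstar : ℝ)
    (hquant : (P {ω | Ψ ω < tstar}).toReal ≤ 1 - (P A).toReal
      ∧ 1 - (P A).toReal ≤ (P {ω | Ψ ω ≤ tstar}).toReal) :
    tstar ∈ Set.Icc (0 : ℝ) 1 ∧ ∀ t ∈ Set.Icc (0 : ℝ) 1, B t ≤ B tstar := by
  exact brier_aux (mΩ := mΩ) mG (hG.trans hH) hA hA0 hA1 hΨm hΨ01 hΨ B hB tstar hquant
end
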